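/- Let M ⊆ ℤ be a nonempty integer interval and let (λ_k)_{k∈M}, (μ_k)_{k∈M} be interlaced real sequences with no finite accumulation point such that Σ_{k∈M}(μ_k − λ_k) = Δ < ∞. Then for every n ∈ M, lim_{ζ → λ_n, ζ ∉ ℝ} (λ_n − ζ)·F(ζ) = (μ_n − λ_n) · ∏_{k∈M, k≠n} (μ_k − λ_n)/(λ_k − λ_n) = Δ/τ_n, where F(ζ) := ∏_{k∈M} (μ_k − ζ)/(λ_k − ζ). -/

import Mathlib

open Filter Topology Complex

/-- With F(ζ) = ∏_{k∈M} (μ_k − ζ)/(λ_k − ζ) and τ_n defined by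
τ_n⁻¹ = ((μ_n − λ_n)/Δ) ∏_{k≠n} (μ_k − λ_n)/(λ_k − λ_n), for every n ∈ M one has
lim_{ζ → λ_n, ζ ∉ ℝ} (λ_n − ζ)·F(ζ) = (μ_n − λ_n) ∏_{k≠n} (μ_k − λ_n)/(λ_k − λ_n) = Δ/τ_n. -/
lemma interlace_mu_lt_lam (M : Set ℤ)
    (hMint : ∀ a b c : ℤ, a ∈ M → c ∈ M → a ≤ b → b ≤ c → b ∈ M)
    (lam mu : ℤ → ℝ)
    (hinter₁ : ∀ k ∈ M, lam k < mu k)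
    (hinter₂ : ∀ k : ℤ, k ∈ M → k + 1 ∈ M → mu k < lam (k + 1)) :
    ∀ j ∈ M, ∀ k ∈ M, j < k → mu j < lam k := by
  intro j hj k hk hjk
  have key : ∀ m : ℤ, j + 1 ≤ m → m ∈ M → mu j < lam m := by
    refine Int.le_induction (fun h => hinter₂ j hj h) ?_
    intro m hm ih hm1
    have hmM : m ∈ M := hMint j m (m+1) hj hm1 (by omega) (by omega)
    exact lt_trans (lt_trans (ih hmM) (hinter₁ m hmM)) (hinter₂ m hmM hm1)
  exact key k (by omega) hk

theorem two_spectra_residue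
    (M : Set ℤ) (hM : M.Nonempty)
    (hMint : ∀ a b c : ℤ, a ∈ M → c ∈ M → a ≤ b → b ≤ c → b ∈ M)
    (lam mu : ℤ → ℝ)
    (hinter₁ : ∀ k ∈ M, lam k < mu k)
    (hinter₂ : ∀ k : ℤ, k ∈ M → k + 1 ∈ M → mu k < lam (k + 1))
    (hacc : ∀ R : ℝ, 0 < R → {k ∈ M | |lam k| ≤ R}.Finite)
    (Δ : ℝ)
    (hsum : HasSum (fun k : M => mu (k : ℤ) - lam (k : ℤ)) Δ)
    (τ : ℤ → ℝ)
    (hτ : ∀ n ∈ M,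
      (τ n)⁻¹ = (mu n - lam n) / Δ *
        ∏' k : {k : M // (k : ℤ) ≠ n},
          (mu ((k : M) : ℤ) - lam n) / (lam ((k : M) : ℤ) - lam n)) :
    ∀ n ∈ M,
      (mu n - lam n) *
          ∏' k : {k : M // (k : ℤ) ≠ n},
            (mu ((k : M) : ℤ) - lam n) / (lam ((k : M) : ℤ) - lam n) = Δ / τ n ∧
      Tendsto
        (fun ζ : ℂ =>
          ((lam n : ℂ) - ζ) * ∏' k : M, ((mu (k : ℤ) : ℂ) - ζ) / ((lam (k : ℤ) : ℂ) - ζ))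
        (𝓝[{ζ : ℂ | ζ.im ≠ 0}] (lam n : ℂ))
        (𝓝 ((Δ / τ n : ℝ) : ℂ)) := by
  classical
  intro n hn
  set n₀ : M := ⟨n, hn⟩ with hn₀
  have hml : ∀ j ∈ M, ∀ k ∈ M, j < k → mu j < lam k :=
    interlace_mu_lt_lam M hMint lam mu hinter₁ hinter₂
  have hlaminc : ∀ j ∈ M, ∀ k ∈ M, j < k → lam j < lam k :=
    fun j hj k hk h => (hinter₁ j hj).trans (hml j hj k hk h)
  have hmun : lam n < mu n := hinter₁ n hn
  -- Δ is positive
  have hΔterm : mu n - lam n ≤ Δ :=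
    le_hasSum hsum n₀ (fun b _ => sub_nonneg.2 (hinter₁ b b.2).le)
  have hΔ : 0 < Δ := lt_of_lt_of_le (by linarith) hΔterm
  -- first conjunct
  have conj1 : (mu n - lam n) *
      ∏' k : {k : M // (k : ℤ) ≠ n},
        (mu ((k : M) : ℤ) - lam n) / (lam ((k : M) : ℤ) - lam n) = Δ / τ n := by
    rw [div_eq_mul_inv, hτ n hn]
    field_simp
  refine ⟨conj1, ?_⟩
  -- separation of the lambdas
  obtain ⟨ε, hεpos, hε1, hsep⟩ :
      ∃ ε : ℝ, 0 < ε ∧ ε ≤ 1 ∧ ∀ k ∈ M, k ≠ n → ε ≤ |lam k - lam n| := by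
    have hRpos : (0:ℝ) < |lam n| + 1 := by positivity
    have hfin := hacc (|lam n| + 1) hRpos
    set Fb : Finset ℤ := hfin.toFinset.erase n with hFb
    have hne_of_mem : ∀ k ∈ M, k ≠ n → lam k ≠ lam n := by
      intro k hk hkn
      rcases lt_or_gt_of_ne hkn with h | h
      · exact (hlaminc k hk n hn h).ne
      · exact (hlaminc n hn k hk h).ne'
    have hfar : ∀ k ∈ M, k ∉ Fb → k ≠ n → 1 ≤ |lam k - lam n| := by
      intro k hk hmem hkn
      have h1 : ¬ (|lam k| ≤ |lam n| + 1) := by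
        intro hle
        exact hmem (Finset.mem_erase.2 ⟨hkn, (Set.Finite.mem_toFinset hfin).2 ⟨hk, hle⟩⟩)
      have h2 : |lam n| + 1 < |lam k| := not_le.1 h1
      have h3 := abs_sub_abs_le_abs_sub (lam k) (lam n)
      linarith
    by_cases hFbne : Fb.Nonempty
    · refine ⟨min 1 (Fb.inf' hFbne fun k => |lam k - lam n|), ?_, min_le_left _ _, ?_⟩
      · refine lt_min one_pos ?_
        rw [Finset.lt_inf'_iff]
        intro k hk
        have hkM : k ∈ M := by
          have h1 := Finset.mem_of_mem_erase hk
          rw [Set.Finite.mem_toFinset] at h1; exact h1.1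
        exact abs_pos.2 (sub_ne_zero.2 (hne_of_mem k hkM (Finset.ne_of_mem_erase hk)))
      · intro k hk hkn
        by_cases hmem : k ∈ Fb
        · exact (min_le_right _ _).trans (Finset.inf'_le _ hmem)
        · exact (min_le_left _ _).trans (hfar k hk hmem hkn)
    · refine ⟨1, one_pos, le_refl 1, ?_⟩
      intro k hk hkn
      by_cases hmem : k ∈ Fb
      · exact absurd ⟨k, hmem⟩ hFbne
      · exact hfar k hk hmem hkn
  -- choice of δ
  obtain ⟨δ, hδpos, hδε, hlo, hhi⟩ :
      ∃ δ : ℝ, 0 < δ ∧ δ ≤ ε/2 ∧ (∀ k ∈ M, k < n → mu k ≤ lam n - 2*δ) ∧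
        (∀ k ∈ M, n < k → lam n + 2*δ ≤ lam k) := by
    have hhi' : ∀ d : ℝ, d ≤ ε/2 → ∀ k ∈ M, n < k → lam n + 2*d ≤ lam k := by
      intro d hd k hk hkn
      have h1 := hsep k hk (by omega)
      have h2 := hlaminc n hn k hk hkn
      have h3 : ε ≤ lam k - lam n := by rwa [abs_of_pos (by linarith)] at h1
      linarith
    by_cases hm1 : (n-1) ∈ M
    · have hmu1 : mu (n-1) < lam n := by
        have := hml (n-1) hm1 n hn (by omega)
        simpa using this
      refine ⟨min (ε/2) ((lam n - mu (n-1))/2), lt_min (by positivity) (by linarith),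
        min_le_left _ _, ?_, hhi' _ (min_le_left _ _)⟩
      intro k hk hkn
      have hmuk : mu k ≤ mu (n-1) := by
        rcases eq_or_lt_of_le (show k ≤ n-1 by omega) with he | hlt
        · rw [he]
        · have h4 : mu k < lam (n-1) := hml k hk (n-1) hm1 (by omega)
          have h5 := hinter₁ (n-1) hm1
          linarith
      have h6 : 2 * min (ε/2) ((lam n - mu (n-1))/2) ≤ lam n - mu (n-1) := by
        have := min_le_right (ε/2) ((lam n - mu (n-1))/2)
        linarith
      linarith
    · refine ⟨ε/2, by positivity, le_refl _, ?_, hhi' _ (le_refl _)⟩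
      intro k hk hkn
      exact absurd (hMint k (n-1) n hk hn (by omega) (by omega)) hm1
  set s : Set ℂ := Metric.closedBall ((lam n : ℝ) : ℂ) δ with hs
  set fc : ℤ → ℂ → ℂ := fun k ζ => ((mu k : ℂ) - ζ) / ((lam k : ℂ) - ζ) with hfc
  -- denominators bounded below on s
  have hden : ∀ k ∈ M, k ≠ n → ∀ ζ ∈ s, ε/2 ≤ ‖(lam k : ℂ) - ζ‖ := by
    intro k hk hkn ζ hζ
    have h1 : ε ≤ dist ((lam k : ℝ) : ℂ) ((lam n : ℝ) : ℂ) := by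
      rw [dist_eq_norm, ← Complex.ofReal_sub, Complex.norm_real, Real.norm_eq_abs]
      exact hsep k hk hkn
    have h2 : dist ζ ((lam n : ℝ) : ℂ) ≤ δ := Metric.mem_closedBall.1 hζ
    have h3 := dist_triangle ((lam k : ℝ) : ℂ) ζ ((lam n : ℝ) : ℂ)
    have h4 : dist ((lam k : ℝ) : ℂ) ζ = ‖(lam k : ℂ) - ζ‖ := by rw [dist_eq_norm]
    rw [← h4]
    linarith
  have hdenne : ∀ k ∈ M, k ≠ n → ∀ ζ ∈ s, (lam k : ℂ) - ζ ≠ 0 := by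
    intro k hk hkn ζ hζ h0
    have h1 := hden k hk hkn ζ hζ
    rw [h0, norm_zero] at h1
    linarith
  -- factor minus one identity and bound
  have hfm1 : ∀ k ∈ M, k ≠ n → ∀ ζ ∈ s,
      fc k ζ = 1 + ((mu k : ℂ) - (lam k : ℂ)) / ((lam k : ℂ) - ζ) ∧
      ‖((mu k : ℂ) - (lam k : ℂ)) / ((lam k : ℂ) - ζ)‖ ≤ (mu k - lam k) * (2/ε) := by
    intro k hk hkn ζ hζ
    have hne := hdenne k hk hkn ζ hζ
    constructor
    · rw [hfc]
      field_simp
      ring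
    · rw [norm_div]
      have h1 : ‖((mu k : ℂ) - (lam k : ℂ))‖ = mu k - lam k := by
        rw [← Complex.ofReal_sub, Complex.norm_real, Real.norm_eq_abs,
          abs_of_pos (sub_pos.2 (hinter₁ k hk))]
      rw [h1]
      have hd := hden k hk hkn ζ hζ
      calc (mu k - lam k) / ‖(lam k : ℂ) - ζ‖ ≤ (mu k - lam k) / (ε/2) := by
            gcongr
            exact (sub_pos.2 (hinter₁ k hk)).le
        _ = (mu k - lam k) * (2/ε) := by
            field_simp
  -- slit plane membership on s
  have hslit : ∀ k ∈ M, k ≠ n → ∀ ζ ∈ s, fc k ζ ∈ slitPlane := by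
    intro k hk hkn ζ hζ
    by_cases hy : ζ.im = 0
    · have hζre : ζ = ((ζ.re : ℝ) : ℂ) := by
        apply Complex.ext <;> simp [hy]
      have hx : |ζ.re - lam n| ≤ δ := by
        have h2 : dist ζ ((lam n : ℝ) : ℂ) ≤ δ := Metric.mem_closedBall.1 hζ
        have h3 : |ζ.re - lam n| ≤ dist ζ ((lam n : ℝ) : ℂ) := by
          rw [dist_eq_norm]
          have h4 : (ζ - ((lam n : ℝ) : ℂ)).re = ζ.re - lam n := by simp
          rw [← h4]
          exact Complex.abs_re_le_norm _
        linarith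
      have hx1 := (abs_le.1 hx).1
      have hx2 := (abs_le.1 hx).2
      have hpos : 0 < (mu k - ζ.re) / (lam k - ζ.re) := by
        rcases lt_or_gt_of_ne hkn with h | h
        · have h1 : mu k ≤ lam n - 2*δ := hlo k hk h
          have h2 := hinter₁ k hk
          apply div_pos_of_neg_of_neg <;> linarith
        · have h1 : lam n + 2*δ ≤ lam k := hhi k hk h
          have h2 := hinter₁ k hk
          apply div_pos <;> linarith
      have heq : fc k ζ = (((mu k - ζ.re) / (lam k - ζ.re) : ℝ) : ℂ) := by
        rw [hfc]
        conv_lhs => rw [hζre]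
        push_cast
        ring
      rw [heq]
      exact Complex.ofReal_mem_slitPlane.2 hpos
    · refine Complex.mem_slitPlane_iff.2 (Or.inr ?_)
      have hdne := hdenne k hk hkn ζ hζ
      have him : (fc k ζ).im = ζ.im * (mu k - lam k) / Complex.normSq ((lam k : ℂ) - ζ) := by
        rw [hfc]
        rw [Complex.div_im]
        simp only [Complex.sub_im, Complex.sub_re, Complex.ofReal_im, Complex.ofReal_re]
        ring
      rw [him]
      exact div_ne_zero (mul_ne_zero hy (sub_pos.2 (hinter₁ k hk)).ne')
        (Complex.normSq_pos.2 hdne).ne'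
  -- continuity of the log factors
  have hlogcont : ∀ k ∈ M, k ≠ n → ContinuousOn (fun ζ => Complex.log (fc k ζ)) s := by
    intro k hk hkn ζ hζ
    refine (ContinuousAt.continuousWithinAt ?_)
    refine ContinuousAt.clog ?_ (hslit k hk hkn ζ hζ)
    exact ContinuousAt.div ((continuous_const.sub continuous_id).continuousAt)
      ((continuous_const.sub continuous_id).continuousAt) (hdenne k hk hkn ζ hζ)
  -- summable majorant
  set w : {k : M // (k : ℤ) ≠ n} → ℝ :=
    fun k => (mu ((k : M) : ℤ) - lam ((k : M) : ℤ)) * (2/ε) with hw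
  have hwsum : Summable w := (hsum.summable.subtype _).mul_right _
  have hwev : ∀ᶠ k : {k : M // (k : ℤ) ≠ n} in cofinite, w k ≤ 1/2 := by
    have h1 := hwsum.tendsto_cofinite_zero.eventually (gt_mem_nhds (by norm_num : (0:ℝ) < 1/2))
    filter_upwards [h1] with k hk using hk.le
  set gL : {k : M // (k : ℤ) ≠ n} → ℂ → ℂ :=
    fun k ζ => Complex.log (fc ((k : M) : ℤ) ζ) with hgL
  have hbound : ∀ᶠ k : {k : M // (k : ℤ) ≠ n} in cofinite, ∀ ζ ∈ s, ‖gL k ζ‖ ≤ 3/2 * w k := by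
    filter_upwards [hwev] with k hk ζ hζ
    obtain ⟨heq, hle⟩ := hfm1 _ (k : M).2 k.2 ζ hζ
    rw [hgL]
    simp only []
    rw [heq]
    calc ‖Complex.log (1 + ((mu ((k:M):ℤ) : ℂ) - (lam ((k:M):ℤ) : ℂ)) / ((lam ((k:M):ℤ) : ℂ) - ζ))‖
        ≤ 3/2 * ‖((mu ((k:M):ℤ) : ℂ) - (lam ((k:M):ℤ) : ℂ)) / ((lam ((k:M):ℤ) : ℂ) - ζ)‖ :=
          Complex.norm_log_one_add_half_le_self (by rw [hw] at hk; linarith)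
      _ ≤ 3/2 * w k := by
          rw [hw]
          nlinarith [norm_nonneg (((mu ((k:M):ℤ) : ℂ) - (lam ((k:M):ℤ) : ℂ)) / ((lam ((k:M):ℤ) : ℂ) - ζ))]
  have hTU : TendstoUniformlyOn (fun (t : Finset {k : M // (k : ℤ) ≠ n}) ζ => ∑ k ∈ t, gL k ζ)
      (fun ζ => ∑' k, gL k ζ) atTop s :=
    tendstoUniformlyOn_tsum_of_cofinite_eventually (hwsum.mul_left (3/2)) hbound
  set H : ℂ → ℂ := fun ζ => ∑' k, gL k ζ with hH
  have hHcont : ContinuousOn H s :=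
    hTU.continuousOn (Eventually.of_forall (f := atTop) fun t =>
      continuousOn_finset_sum t fun (k : {k : M // (k : ℤ) ≠ n}) _ => hlogcont _ (k : M).2 k.2).frequently
  have hsnhds : s ∈ 𝓝 ((lam n : ℝ) : ℂ) := Metric.closedBall_mem_nhds _ hδpos
  have hHat : ContinuousAt H ((lam n : ℝ) : ℂ) := hHcont.continuousAt hsnhds
  set φ : ℂ → ℂ := fun ζ => ((mu n : ℂ) - ζ) * Complex.exp (H ζ) with hφ
  have hφat : ContinuousAt φ ((lam n : ℝ) : ℂ) :=
    ((continuous_const.sub continuous_id).continuousAt).mul hHat.cexp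
  -- the value of φ at lam n
  have hLn : ((lam n : ℝ) : ℂ) ∈ s := Metric.mem_closedBall_self hδpos.le
  have hφval : φ ((lam n : ℝ) : ℂ) = ((Δ / τ n : ℝ) : ℂ) := by
    set r : {k : M // (k : ℤ) ≠ n} → ℝ :=
      fun k => (mu ((k : M) : ℤ) - lam n) / (lam ((k : M) : ℤ) - lam n) with hr
    have hrpos : ∀ k, 0 < r k := by
      intro k
      rcases lt_or_gt_of_ne k.2 with h | h
      · have h1 : mu ((k:M):ℤ) ≤ lam n - 2*δ := hlo _ (k : M).2 h
        have h2 := hinter₁ _ (k : M).2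
        exact div_pos_of_neg_of_neg (by linarith) (by linarith)
      · have h1 : lam n + 2*δ ≤ lam ((k:M):ℤ) := hhi _ (k : M).2 h
        have h2 := hinter₁ _ (k : M).2
        exact div_pos (by linarith) (by linarith)
    have hfcr : ∀ k : {k : M // (k : ℤ) ≠ n},
        fc ((k : M) : ℤ) ((lam n : ℝ) : ℂ) = ((r k : ℝ) : ℂ) := by
      intro k
      rw [hfc, hr]
      push_cast
      ring
    have hsumlogL : Summable (fun k : {k : M // (k : ℤ) ≠ n} =>
        Complex.log (fc ((k : M) : ℤ) ((lam n : ℝ) : ℂ))) := by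
      apply Summable.of_norm_bounded_eventually (hwsum.mul_left (3/2))
      filter_upwards [hbound] with k hk using hk _ hLn
    have hsumreal : Summable (fun k : {k : M // (k : ℤ) ≠ n} => Real.log (r k)) := by
      have h1 := hsumlogL.map Complex.reAddGroupHom Complex.continuous_re
      apply h1.congr
      intro k
      simp only [Complex.coe_reAddGroupHom, Function.comp]
      rw [hfcr k, ← Complex.ofReal_log (hrpos k).le, Complex.ofReal_re]
    have hHval : H ((lam n : ℝ) : ℂ) = ((∑' k, Real.log (r k) : ℝ) : ℂ) := by
      rw [hH]
      simp only []
      rw [Complex.ofReal_tsum]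
      apply tsum_congr
      intro k
      rw [hgL]
      simp only []
      rw [hfcr k, ← Complex.ofReal_log (hrpos k).le]
    have hexpH : Complex.exp (H ((lam n : ℝ) : ℂ)) = ((∏' k, r k : ℝ) : ℂ) := by
      rw [hHval, ← Complex.ofReal_exp]
      congr 1
      have h2 := Real.rexp_tsum_eq_tprod
        (f := fun k => r k) (fun k => hrpos k) hsumreal
      exact h2
    rw [hφ]
    simp only []
    rw [hexpH, ← conj1]
    push_cast
    ring
  have htend : Tendsto φ (𝓝[{ζ : ℂ | ζ.im ≠ 0}] ((lam n : ℝ) : ℂ))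
      (𝓝 ((Δ / τ n : ℝ) : ℂ)) := by
    rw [← hφval]
    exact hφat.tendsto.mono_left nhdsWithin_le_nhds
  refine Tendsto.congr' ?_ htend
  have h1 : ∀ᶠ ζ in 𝓝[{ζ : ℂ | ζ.im ≠ 0}] ((lam n : ℝ) : ℂ), ζ ∈ s :=
    mem_nhdsWithin_of_mem_nhds hsnhds
  have h2 : ∀ᶠ ζ in 𝓝[{ζ : ℂ | ζ.im ≠ 0}] ((lam n : ℝ) : ℂ), ζ.im ≠ 0 :=
    eventually_mem_nhdsWithin
  filter_upwards [h1, h2] with ζ hζs hζim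
  -- pointwise identity for nonreal ζ in s
  have hnum : ∀ k : M, ((mu (k : ℤ) : ℂ) - ζ) ≠ 0 := by
    intro k h0
    apply hζim
    have := congrArg Complex.im h0
    simpa using this
  have hdenz : ∀ k : M, ((lam (k : ℤ) : ℂ) - ζ) ≠ 0 := by
    intro k h0
    apply hζim
    have := congrArg Complex.im h0
    simpa using this
  have hfcne : ∀ k : M, fc (k : ℤ) ζ ≠ 0 := fun k => div_ne_zero (hnum k) (hdenz k)
  have hnev : ∀ᶠ k : M in Filter.cofinite, (k : ℤ) ≠ n := by
    rw [Filter.eventually_cofinite]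
    apply Set.Finite.subset (Set.finite_singleton n₀)
    intro k hk
    simp only [Set.mem_setOf_eq, not_not] at hk
    exact Subtype.ext hk
  have hwevM : ∀ᶠ k : M in Filter.cofinite, (mu (k : ℤ) - lam (k : ℤ)) * (2/ε) ≤ 1/2 := by
    have h3 := ((hsum.summable.mul_right (2/ε)).tendsto_cofinite_zero).eventually
      (gt_mem_nhds (by norm_num : (0:ℝ) < 1/2))
    filter_upwards [h3] with k hk using hk.le
  have hsummlog : Summable (fun k : M => Complex.log (fc (k : ℤ) ζ)) := by
    apply Summable.of_norm_bounded_eventually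
      (g := fun k : M => 3/2 * ((mu (k : ℤ) - lam (k : ℤ)) * (2/ε)))
      ((hsum.summable.mul_right _).mul_left _)
    filter_upwards [hnev, hwevM] with k hk1 hk2
    obtain ⟨heq, hle⟩ := hfm1 _ k.2 hk1 ζ hζs
    rw [heq]
    calc ‖Complex.log (1 + ((mu (k:ℤ) : ℂ) - (lam (k:ℤ) : ℂ)) / ((lam (k:ℤ) : ℂ) - ζ))‖
        ≤ 3/2 * ‖((mu (k:ℤ) : ℂ) - (lam (k:ℤ) : ℂ)) / ((lam (k:ℤ) : ℂ) - ζ)‖ :=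
          Complex.norm_log_one_add_half_le_self (by linarith)
      _ ≤ 3/2 * ((mu (k:ℤ) - lam (k:ℤ)) * (2/ε)) := by linarith
  have hprodM : ∏' k : M, fc (k : ℤ) ζ
      = Complex.exp (∑' k : M, Complex.log (fc (k : ℤ) ζ)) := by
    have h4 := Complex.cexp_tsum_eq_tprod
      (f := fun (k : M) => fc (k : ℤ) ζ) (fun k => hfcne k) hsummlog
    exact h4.symm
  have hsplit : ∑' k : M, Complex.log (fc (k : ℤ) ζ)
      = Complex.log (fc n ζ) + ∑' k : {k : M // (k : ℤ) ≠ n}, Complex.log (fc ((k : M) : ℤ) ζ) := by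
    rw [hsummlog.tsum_eq_add_tsum_ite n₀]
    congr 1
    have hinj : Function.Injective (fun k : {k : M // (k : ℤ) ≠ n} => (k : M)) :=
      Subtype.coe_injective
    have h5 := hinj.tsum_eq
      (f := fun k : M => if k = n₀ then 0 else Complex.log (fc (k : ℤ) ζ)) ?_
    · rw [← h5]
      apply tsum_congr
      intro k
      rw [if_neg]
      intro hcon
      exact k.2 (congrArg Subtype.val hcon)
    · intro k hk
      by_cases hkn : (k : ℤ) = n
      · exfalso
        apply hk
        have hkeq : k = n₀ := Subtype.ext (show (k : ℤ) = ((n₀ : M) : ℤ) from hkn)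
        simp [hkeq]
      · exact ⟨⟨k, hkn⟩, rfl⟩
  rw [hprodM, hsplit, Complex.exp_add, Complex.exp_log (hfcne n₀)]
  have hfcn : fc ((n₀ : M) : ℤ) ζ = ((mu n : ℂ) - ζ) / ((lam n : ℂ) - ζ) := rfl
  rw [hφ, hH, hgL]
  simp only []
  rw [hfcn]
  have hlne : ((lam n : ℂ) - ζ) ≠ 0 := hdenz n₀
  field_simp
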